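/- Let Q = y_i y_j ⟨x_i, x_j⟩ be the Gram matrix with ‖x_i‖ ≤ 1 and (1/n)‖Q‖ ≤ σ², and fix β_b = 1 + (b-1)(nσ²-1)/(n-1). Define D(α) = -(1/(2λn²))(αᵀQα) + (1/n)∑α_i and H(δ, α) = -(1/(2λn²))(αᵀQα + 2αᵀQδ + β_b‖δ‖²) + (1/n)∑(α_i + δ_i). Then for any α, δ ∈ ℝⁿ and A a uniformly random b-subset of {1,…,n}: E_A[D(α + δ_{[A]})] ≥ (1 - b/n) D(α) + (b/n) H(δ, α). -/

import Mathlib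

open Finset

/-- The SVM dual objective `D(α) = -(1/(2λn²)) αᵀQα + (1/n)∑ α_i`. -/
noncomputable def dualD (lam : ℝ) (n : ℕ) (Q : Matrix (Fin n) (Fin n) ℝ)
    (α : Fin n → ℝ) : ℝ :=
  -(1 / (2 * lam * (n : ℝ) ^ 2)) * (∑ i, ∑ j, α i * Q i j * α j)
    + (1 / (n : ℝ)) * ∑ i, α i

/-- The separable approximation
`H(δ,α) = -(1/(2λn²))(αᵀQα + 2αᵀQδ + β_b‖δ‖²) + (1/n)∑(α_i+δ_i)`. -/
noncomputable def sepH (lam : ℝ) (n : ℕ) (Q : Matrix (Fin n) (Fin n) ℝ)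
    (βb : ℝ) (δ α : Fin n → ℝ) : ℝ :=
  -(1 / (2 * lam * (n : ℝ) ^ 2)) *
      ((∑ i, ∑ j, α i * Q i j * α j) + 2 * (∑ i, ∑ j, α i * Q i j * δ j)
        + βb * ∑ i, (δ i) ^ 2)
    + (1 / (n : ℝ)) * ∑ i, (α i + δ i)

lemma countSub {m : Type*} [Fintype m] [DecidableEq m] (b : ℕ) (t : Finset m) (hb : t.card ≤ b) :
    ((Finset.powersetCard b (Finset.univ : Finset m)).filter (fun A => t ⊆ A)).card
      = (Fintype.card m - t.card).choose (b - t.card) := by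
  rw [← Finset.card_compl t, ← Finset.card_powersetCard]
  apply Finset.card_bij' (fun A _ => A \ t) (fun B _ => B ∪ t)
  · intro A hA
    simp only [Finset.mem_filter, Finset.mem_powersetCard] at hA
    obtain ⟨⟨-, hcard⟩, hts⟩ := hA
    simp only [Finset.mem_powersetCard]
    constructor
    · intro x hx
      simp only [Finset.mem_sdiff] at hx
      simpa using hx.2
    · rw [Finset.card_sdiff_of_subset hts, hcard]
  · intro B hB
    simp only [Finset.mem_powersetCard] at hB
    obtain ⟨hBs, hBcard⟩ := hB
    have hdisj : Disjoint B t := by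
      refine Finset.disjoint_left.mpr fun x hx hxt => ?_
      have := hBs hx
      simp at this
      exact this hxt
    simp only [Finset.mem_filter, Finset.mem_powersetCard]
    refine ⟨⟨Finset.subset_univ _, ?_⟩, Finset.subset_union_right⟩
    rw [Finset.card_union_of_disjoint hdisj, hBcard]
    omega
  · intro A hA
    simp only [Finset.mem_filter] at hA
    exact Finset.sdiff_union_of_subset hA.2
  · intro B hB
    simp only [Finset.mem_powersetCard] at hB
    have hdisj : Disjoint B t := by
      refine Finset.disjoint_left.mpr fun x hx hxt => ?_
      have := hB.1 hx
      simp at this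
      exact this hxt
    rw [Finset.union_sdiff_right, Finset.sdiff_eq_self_of_disjoint hdisj]

lemma quadBound (n : ℕ) (Q : Matrix (Fin n) (Fin n) ℝ) (δ : Fin n → ℝ) :
    ∑ i, ∑ j, δ i * Q i j * δ j
      ≤ ‖Matrix.toEuclideanCLM (𝕜 := ℝ) Q‖ * ∑ i, δ i ^ 2 := by
  set T := Matrix.toEuclideanCLM (𝕜 := ℝ) Q with hT
  set v : EuclideanSpace ℝ (Fin n) := (WithLp.equiv 2 _).symm δ with hv
  have h1 : ∑ i, ∑ j, δ i * Q i j * δ j = inner ℝ v (T v) := by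
    rw [hT, hv, WithLp.equiv_symm_apply, Matrix.toEuclideanCLM_toLp]
    simp only [PiLp.inner_apply, RCLike.inner_apply, starRingEnd_apply, star_trivial]
    refine Finset.sum_congr rfl fun i _ => ?_
    simp [Matrix.mulVec, dotProduct, Finset.mul_sum, mul_assoc]
    rw [Finset.sum_mul]; exact Finset.sum_congr rfl fun j _ => by ring
  have h2 : inner ℝ v (T v) ≤ ‖v‖ * ‖T v‖ := real_inner_le_norm _ _
  have h3 : ‖T v‖ ≤ ‖T‖ * ‖v‖ := T.le_opNorm v
  have h4 : ‖v‖ * ‖v‖ = ∑ i, δ i ^ 2 := by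
    rw [← real_inner_self_eq_norm_mul_norm]
    simp only [PiLp.inner_apply, RCLike.inner_apply, starRingEnd_apply, star_trivial]
    exact Finset.sum_congr rfl fun i _ => (sq (δ i)).symm
  have h5 : (0:ℝ) ≤ ‖v‖ := norm_nonneg _
  calc ∑ i, ∑ j, δ i * Q i j * δ j = inner ℝ v (T v) := h1
    _ ≤ ‖v‖ * ‖T v‖ := h2
    _ ≤ ‖v‖ * (‖T‖ * ‖v‖) := by nlinarith [norm_nonneg (T v)]
    _ = ‖T‖ * ∑ i, δ i ^ 2 := by rw [← h4]; ring

lemma quadExpand (n : ℕ) (Q : Matrix (Fin n) (Fin n) ℝ) (hs : ∀ i j, Q i j = Q j i)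
    (a e : Fin n → ℝ) :
    ∑ i, ∑ j, (a i + e i) * Q i j * (a j + e j)
      = (∑ i, ∑ j, a i * Q i j * a j) + 2 * (∑ i, ∑ j, a i * Q i j * e j)
        + ∑ i, ∑ j, e i * Q i j * e j := by
  have h : ∑ i, ∑ j, e i * Q i j * a j = ∑ i, ∑ j, a i * Q i j * e j := by
    rw [Finset.sum_comm]
    exact Finset.sum_congr rfl fun i _ => Finset.sum_congr rfl fun j _ => by rw [hs j i]; ring
  have key : ∀ i j : Fin n, (a i + e i) * Q i j * (a j + e j)
      = a i * Q i j * a j + a i * Q i j * e j + e i * Q i j * a j + e i * Q i j * e j := by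
    intros; ring
  simp_rw [key, Finset.sum_add_distrib]
  rw [h]; ring

lemma chooseId (n b : ℕ) (hn : 1 ≤ n) (hb1 : 1 ≤ b) :
    b * n.choose b = n * (n-1).choose (b-1) := by
  have := Nat.add_one_mul_choose_eq (n-1) (b-1)
  simp only [Nat.succ_eq_add_one, Nat.sub_add_cancel hn, Nat.sub_add_cancel hb1] at this
  rw [this, Nat.mul_comm]

set_option maxHeartbeats 1000000 in
/-- Lemma 3: `E_A[D(α + δ_{[A]})] ≥ (1 - b/n) D(α) + (b/n) H(δ, α)` for a
uniformly random `b`-subset `A`, with `Q` the Gram matrix of data with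
`‖x_i‖ ≤ 1` and `(1/n)‖Q‖ ≤ σ²`, and `β_b = 1 + (b-1)(nσ²-1)/(n-1)`. -/
theorem stmt9 (n b d : ℕ) (hn : 2 ≤ n) (hb1 : 1 ≤ b) (hbn : b ≤ n)
    (lam : ℝ) (hlam : 0 < lam)
    (x : Fin n → EuclideanSpace ℝ (Fin d)) (y : Fin n → ℝ)
    (hy : ∀ i, y i = 1 ∨ y i = -1) (hx : ∀ i, ‖x i‖ ≤ 1)
    (Q : Matrix (Fin n) (Fin n) ℝ)
    (hQ : ∀ i j, Q i j = y i * y j * (inner ℝ (x i) (x j) : ℝ))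
    (σ2 : ℝ) (hσ : 1 / (n : ℝ) ≤ σ2)
    (hspec : (1 / (n : ℝ)) * ‖Matrix.toEuclideanCLM (𝕜 := ℝ) Q‖ ≤ σ2)
    (α δ : Fin n → ℝ) :
    (∑ A ∈ Finset.powersetCard b (Finset.univ : Finset (Fin n)),
        dualD lam n Q (fun i => α i + if i ∈ A then δ i else 0))
      / (n.choose b : ℝ)
    ≥ (1 - (b : ℝ) / n) * dualD lam n Q α
      + ((b : ℝ) / n) *
          sepH lam n Q (1 + ((b : ℝ) - 1) * ((n : ℝ) * σ2 - 1) / ((n : ℝ) - 1))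
            δ α := by
  classical
  set P := Finset.powersetCard b (Finset.univ : Finset (Fin n)) with hP
  set N1 : ℕ := (n-1).choose (b-1) with hN1def
  set N2 : ℕ := if 2 ≤ b then (n-2).choose (b-2) else 0 with hN2def
  set Cn : ℕ := n.choose b with hCndef
  -- basic positivity
  have hn0 : (0:ℝ) < (n:ℝ) := by positivity
  have hn1ne : ((n:ℝ) - 1) ≠ 0 := by
    have : (2:ℝ) ≤ (n:ℝ) := by exact_mod_cast hn
    linarith
  have hCn0 : 0 < Cn := Nat.choose_pos hbn
  have hCr : (0:ℝ) < (Cn:ℝ) := by exact_mod_cast hCn0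
  have hc : (0:ℝ) < 1 / (2 * lam * (n:ℝ)^2) := by positivity
  -- counting facts
  have hcnt1 : ∀ i : Fin n, (P.filter (fun A => i ∈ A)).card = N1 := by
    intro i
    have h := countSub (m := Fin n) b {i} (by simpa using hb1)
    simp only [Finset.singleton_subset_iff, Finset.card_singleton, Fintype.card_fin] at h
    exact h
  have hcnt2 : ∀ i j : Fin n, i ≠ j →
      (P.filter (fun A => i ∈ A ∧ j ∈ A)).card = N2 := by
    intro i j hij
    by_cases hb2 : 2 ≤ b
    · have hcard2 : ({i, j} : Finset (Fin n)).card = 2 := by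
        rw [Finset.card_insert_of_notMem (by simpa using hij), Finset.card_singleton]
      have h := countSub (m := Fin n) b {i, j} (by rw [hcard2]; exact hb2)
      simp only [Finset.insert_subset_iff, Finset.singleton_subset_iff, hcard2,
        Fintype.card_fin] at h
      rw [hN2def, if_pos hb2]
      exact h
    · have hb1' : b = 1 := by omega
      rw [hN2def, if_neg hb2]
      rw [Finset.card_eq_zero, Finset.filter_eq_empty_iff]
      rintro A hA ⟨hiA, hjA⟩
      rw [hP, Finset.mem_powersetCard] at hA
      have : 1 < A.card := Finset.one_lt_card.mpr ⟨i, hiA, j, hjA, hij⟩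
      omega
  -- numeric identities
  have hnat1 : b * Cn = n * N1 := chooseId n b (by omega) hb1
  have hnat2 : n * (n-1) * N2 = b * (b-1) * Cn := by
    by_cases hb2 : 2 ≤ b
    · have h1 : (b-1) * (n-1).choose (b-1) = (n-1) * (n-2).choose (b-2) := by
        have := chooseId (n-1) (b-1) (by omega) (by omega)
        simpa [show n - 1 - 1 = n - 2 by omega, show b - 1 - 1 = b - 2 by omega] using this
      rw [hN2def, if_pos hb2]
      calc n * (n-1) * (n-2).choose (b-2) = n * ((n-1) * (n-2).choose (b-2)) := by ring
        _ = n * ((b-1) * (n-1).choose (b-1)) := by rw [h1]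
        _ = (b-1) * (n * N1) := by rw [hN1def]; ring
        _ = (b-1) * (b * Cn) := by rw [← hnat1]
        _ = b * (b-1) * Cn := by ring
    · have : b = 1 := by omega
      subst this
      rw [hN2def, if_neg hb2]
      simp
  have e1 : (N1:ℝ) = (b:ℝ) * (Cn:ℝ) / (n:ℝ) := by
    have h := congrArg (fun k : ℕ => (k:ℝ)) hnat1
    push_cast at h
    field_simp
    linarith
  have e2 : (N2:ℝ) = (b:ℝ) * ((b:ℝ)-1) * (Cn:ℝ) / ((n:ℝ) * ((n:ℝ)-1)) := by
    have h := congrArg (fun k : ℕ => (k:ℝ)) hnat2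
    have h1n : (1:ℕ) ≤ n := by omega
    push_cast [Nat.cast_sub h1n, Nat.cast_sub hb1] at h
    field_simp
    linarith
  have hn1pos : (0:ℝ) < (n:ℝ) - 1 := by
    have : (2:ℝ) ≤ (n:ℝ) := by exact_mod_cast hn
    linarith
  have hN12 : (N2:ℝ) ≤ (N1:ℝ) := by
    rw [e1, e2]
    rw [div_le_div_iff₀ (mul_pos hn0 hn1pos) hn0]
    have hbr : (1:ℝ) ≤ (b:ℝ) := by exact_mod_cast hb1
    have hbnr : (b:ℝ) ≤ (n:ℝ) := by exact_mod_cast hbn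
    nlinarith [mul_nonneg (mul_nonneg (mul_nonneg (by positivity : (0:ℝ) ≤ (b:ℝ)) hCr.le) hn0.le) (by linarith : (0:ℝ) ≤ (n:ℝ) - (b:ℝ))]
  -- symmetry and diagonal of Q
  have hQsym : ∀ i j, Q i j = Q j i := by
    intro i j
    rw [hQ, hQ, real_inner_comm]
    ring
  have hQdiag : ∀ i, 0 ≤ Q i i ∧ Q i i ≤ 1 := by
    intro i
    have hy2 : y i * y i = 1 := by rcases hy i with h | h <;> rw [h] <;> norm_num
    rw [hQ i i, hy2, one_mul, real_inner_self_eq_norm_sq]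
    constructor
    · positivity
    · have := hx i
      nlinarith [norm_nonneg (x i)]
  -- expansion of each summand
  have hexp : ∀ A ∈ P, dualD lam n Q (fun i => α i + if i ∈ A then δ i else 0)
      = dualD lam n Q α
        - (1 / (2 * lam * (n:ℝ)^2)) *
            (2 * (∑ i, ∑ j, α i * Q i j * (if j ∈ A then δ j else 0))
             + ∑ i, ∑ j, (if i ∈ A then δ i else 0) * Q i j * (if j ∈ A then δ j else 0))
        + (1/(n:ℝ)) * ∑ i, (if i ∈ A then δ i else 0) := by
    intro A _
    simp only [dualD]
    rw [quadExpand n Q hQsym α (fun i => if i ∈ A then δ i else 0),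
      Finset.sum_add_distrib]
    ring
  -- the three averaged sums
  have hu : ∑ A ∈ P, ∑ i, ∑ j, α i * Q i j * (if j ∈ A then δ j else 0)
      = (N1:ℝ) * ∑ i, ∑ j, α i * Q i j * δ j := by
    rw [Finset.sum_comm, Finset.mul_sum]
    refine Finset.sum_congr rfl fun i _ => ?_
    rw [Finset.sum_comm, Finset.mul_sum]
    refine Finset.sum_congr rfl fun j _ => ?_
    have h : ∀ A : Finset (Fin n), α i * Q i j * (if j ∈ A then δ j else 0)
        = if j ∈ A then α i * Q i j * δ j else 0 := by
      intro A; split <;> ring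
    simp_rw [h]
    rw [← Finset.sum_filter, Finset.sum_const, hcnt1 j, nsmul_eq_mul]
  have hw : ∑ A ∈ P, ∑ i, (if i ∈ A then δ i else 0) = (N1:ℝ) * ∑ i, δ i := by
    rw [Finset.sum_comm, Finset.mul_sum]
    refine Finset.sum_congr rfl fun i _ => ?_
    rw [← Finset.sum_filter, Finset.sum_const, hcnt1 i, nsmul_eq_mul]
  have hvT : ∑ A ∈ P, ∑ i, ∑ j, (if i ∈ A then δ i else 0) * Q i j * (if j ∈ A then δ j else 0)
      = (N2:ℝ) * (∑ i, ∑ j, δ i * Q i j * δ j)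
        + ((N1:ℝ) - (N2:ℝ)) * ∑ i, Q i i * δ i ^ 2 := by
    rw [Finset.sum_comm]
    have step : ∀ i : Fin n, ∑ A ∈ P, ∑ j, (if i ∈ A then δ i else 0) * Q i j * (if j ∈ A then δ j else 0)
        = ∑ j, ((P.filter (fun A => i ∈ A ∧ j ∈ A)).card : ℝ) * (δ i * Q i j * δ j) := by
      intro i
      rw [Finset.sum_comm]
      refine Finset.sum_congr rfl fun j _ => ?_
      have h : ∀ A : Finset (Fin n), (if i ∈ A then δ i else 0) * Q i j * (if j ∈ A then δ j else 0)
          = if i ∈ A ∧ j ∈ A then δ i * Q i j * δ j else 0 := by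
        intro A
        by_cases h1 : i ∈ A <;> by_cases h2 : j ∈ A <;> simp [h1, h2]
      simp_rw [h]
      rw [← Finset.sum_filter, Finset.sum_const, nsmul_eq_mul]
    simp_rw [step]
    have cval : ∀ i j : Fin n, ((P.filter (fun A => i ∈ A ∧ j ∈ A)).card : ℝ)
        = if i = j then (N1:ℝ) else (N2:ℝ) := by
      intro i j
      by_cases h : i = j
      · subst h
        rw [if_pos rfl]
        have : (P.filter (fun A => i ∈ A ∧ i ∈ A)) = P.filter (fun A => i ∈ A) := by
          simp
        rw [this, hcnt1 i]
      · rw [if_neg h, hcnt2 i j h]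
    simp_rw [cval]
    have split : ∀ i j : Fin n, (if i = j then (N1:ℝ) else (N2:ℝ)) * (δ i * Q i j * δ j)
        = (N2:ℝ) * (δ i * Q i j * δ j)
          + (if i = j then ((N1:ℝ) - (N2:ℝ)) * (Q i i * δ i ^ 2) else 0) := by
      intro i j
      by_cases h : i = j
      · subst h; rw [if_pos rfl, if_pos rfl]; ring
      · rw [if_neg h, if_neg h]; ring
    simp_rw [split, Finset.sum_add_distrib, Finset.sum_ite_eq]
    simp only [Finset.mem_univ, if_true]
    simp_rw [← Finset.mul_sum]
  -- bound on the quadratic term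
  have hnormQ : ‖Matrix.toEuclideanCLM (𝕜 := ℝ) Q‖ ≤ (n:ℝ) * σ2 := by
    set M := ‖Matrix.toEuclideanCLM (𝕜 := ℝ) Q‖ with hM
    have h1 : (1/(n:ℝ)) * M ≤ σ2 := hspec
    have h2 : M = (n:ℝ) * ((1/(n:ℝ)) * M) := by field_simp
    rw [h2]
    exact mul_le_mul_of_nonneg_left h1 hn0.le
  have hquad : ∑ i, ∑ j, δ i * Q i j * δ j ≤ (n:ℝ) * σ2 * ∑ i, δ i ^ 2 := by
    have h1 := quadBound n Q δ
    have h2 : (0:ℝ) ≤ ∑ i, δ i ^ 2 := by positivity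
    nlinarith [h1, h2, hnormQ]
  have hdiagsum : ∑ i, Q i i * δ i ^ 2 ≤ ∑ i, δ i ^ 2 := by
    refine Finset.sum_le_sum fun i _ => ?_
    have := hQdiag i
    nlinarith [sq_nonneg (δ i)]
  have hN2nn : (0:ℝ) ≤ (N2:ℝ) := Nat.cast_nonneg _
  -- coefficient identity
  have hcoef : ((N1:ℝ) - (N2:ℝ)) + (N2:ℝ) * ((n:ℝ) * σ2)
      = (Cn:ℝ) * ((b:ℝ)/(n:ℝ)) * (1 + ((b:ℝ) - 1) * ((n:ℝ) * σ2 - 1) / ((n:ℝ) - 1)) := by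
    rw [e1, e2]
    field_simp
    ring
  -- total bound on T
  have hT : ∑ A ∈ P, ∑ i, ∑ j, (if i ∈ A then δ i else 0) * Q i j * (if j ∈ A then δ j else 0)
      ≤ (Cn:ℝ) * ((b:ℝ)/(n:ℝ)) * (1 + ((b:ℝ) - 1) * ((n:ℝ) * σ2 - 1) / ((n:ℝ) - 1))
          * ∑ i, δ i ^ 2 := by
    rw [hvT, ← hcoef]
    have h2 : (0:ℝ) ≤ ∑ i, δ i ^ 2 := by positivity
    nlinarith [mul_le_mul_of_nonneg_left hquad hN2nn,
      mul_le_mul_of_nonneg_left hdiagsum (by linarith [hN12] : (0:ℝ) ≤ (N1:ℝ) - (N2:ℝ))]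
  -- assemble the total sum
  have hsum : ∑ A ∈ P, dualD lam n Q (fun i => α i + if i ∈ A then δ i else 0)
      = (Cn:ℝ) * dualD lam n Q α
        - (1 / (2 * lam * (n:ℝ)^2)) *
            (2 * ((N1:ℝ) * ∑ i, ∑ j, α i * Q i j * δ j)
             + ∑ A ∈ P, ∑ i, ∑ j, (if i ∈ A then δ i else 0) * Q i j * (if j ∈ A then δ j else 0))
        + (1/(n:ℝ)) * ((N1:ℝ) * ∑ i, δ i) := by
    rw [Finset.sum_congr rfl hexp]
    rw [Finset.sum_add_distrib, Finset.sum_sub_distrib, Finset.sum_const]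
    rw [← Finset.mul_sum, ← Finset.mul_sum]
    rw [Finset.sum_add_distrib, ← Finset.mul_sum, hu, hw]
    have : P.card = Cn := by rw [hP, Finset.card_powersetCard, Finset.card_univ, Fintype.card_fin]
    rw [this, nsmul_eq_mul]
  -- final inequality
  rw [ge_iff_le, le_div_iff₀ hCr, hsum]
  have hfin : ((1 - (b:ℝ)/(n:ℝ)) * dualD lam n Q α
      + ((b:ℝ)/(n:ℝ)) * sepH lam n Q (1 + ((b:ℝ) - 1) * ((n:ℝ) * σ2 - 1) / ((n:ℝ) - 1)) δ α)
        * (Cn:ℝ)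
      = (Cn:ℝ) * dualD lam n Q α
        - (1 / (2 * lam * (n:ℝ)^2)) *
            (2 * ((N1:ℝ) * ∑ i, ∑ j, α i * Q i j * δ j)
             + (Cn:ℝ) * ((b:ℝ)/(n:ℝ)) * (1 + ((b:ℝ) - 1) * ((n:ℝ) * σ2 - 1) / ((n:ℝ) - 1))
                 * ∑ i, δ i ^ 2)
        + (1/(n:ℝ)) * ((N1:ℝ) * ∑ i, δ i) := by
    simp only [dualD, sepH, Finset.sum_add_distrib]
    rw [e1]
    field_simp
    ring
  rw [hfin]
  have := mul_le_mul_of_nonneg_left hT hc.le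
  linarith
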